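/- Let X and Y be topological spaces and f : X → Y a d-map, i.e., f is continuous, open, and each fiber f⁻¹({y}) is a discrete subspace of X. Let D_X : Ordinal → Set X and D_Y : Ordinal → Set Y be the Cantor–Bendixson sequences of X and Y respectively (D(0) = whole space, D(α+1) = derived set of D(α), D(λ) = ⋂_{β<λ} D(β) for limit λ). Then for every ordinal α, D_X(α) = f⁻¹(D_Y(α)). -/

import Mathlib

universe u

lemma dmap_derivedSet_preimage {X Y : Type u} [TopologicalSpace X] [TopologicalSpace Y]
    (f : X → Y) (hcont : Continuous f) (hopen : IsOpenMap f)
    (hdisc : ∀ y : Y, DiscreteTopology (f ⁻¹' {y} : Set X)) (A : Set Y) :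
    derivedSet (f ⁻¹' A) = f ⁻¹' derivedSet A := by
  ext x
  simp only [Set.mem_preimage, mem_derivedSet, accPt_iff_nhds]
  constructor
  · intro h U hU
    -- use discreteness of fiber over f x
    obtain ⟨V, hVopen, hxV, hV⟩ :
        ∃ V : Set X, IsOpen V ∧ x ∈ V ∧ V ∩ f ⁻¹' {f x} ⊆ {x} := by
      have : IsOpen ({(⟨x, rfl⟩ : (f ⁻¹' {f x} : Set X))} : Set (f ⁻¹' {f x} : Set X)) :=
        isOpen_discrete _
      rw [isOpen_induced_iff] at this
      obtain ⟨V, hVopen, hVeq⟩ := this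
      refine ⟨V, hVopen, ?_, ?_⟩
      · have : (⟨x, rfl⟩ : (f ⁻¹' {f x} : Set X)) ∈ (Subtype.val ⁻¹' V : Set _) := by
          rw [hVeq]; exact rfl
        exact this
      · rintro z ⟨hzV, hz⟩
        have : (⟨z, hz⟩ : (f ⁻¹' {f x} : Set X)) ∈ (Subtype.val ⁻¹' V : Set _) := hzV
        rw [hVeq] at this
        simpa using congrArg Subtype.val this
    have hmem : f ⁻¹' U ∩ V ∈ nhds x :=
      Filter.inter_mem (hcont.continuousAt.preimage_mem_nhds hU)
        (hVopen.mem_nhds hxV)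
    obtain ⟨z, ⟨⟨hzU, hzV⟩, hzA⟩, hzx⟩ := h _ hmem
    refine ⟨f z, ⟨hzU, hzA⟩, fun hfz => ?_⟩
    exact hzx (hV ⟨hzV, hfz⟩)
  · intro h U hU
    obtain ⟨W, hWU, hWopen, hxW⟩ := mem_nhds_iff.mp hU
    obtain ⟨y, ⟨hyW, hyA⟩, hyx⟩ := h (f '' W) ((hopen W hWopen).mem_nhds ⟨x, hxW, rfl⟩)
    obtain ⟨z, hzW, rfl⟩ := hyW
    exact ⟨z, ⟨hWU hzW, hyA⟩, fun hzx => hyx (by rw [hzx])⟩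

theorem dmap_preimage_cantorBendixson {X Y : Type u} [TopologicalSpace X] [TopologicalSpace Y]
    (f : X → Y) (hcont : Continuous f) (hopen : IsOpenMap f)
    (hdisc : ∀ y : Y, DiscreteTopology (f ⁻¹' {y} : Set X))
    (DX : Ordinal.{u} → Set X) (DY : Ordinal.{u} → Set Y)
    (hX0 : DX 0 = Set.univ)
    (hXsucc : ∀ α : Ordinal.{u}, DX (α + 1) = derivedSet (DX α))
    (hXlim : ∀ l : Ordinal.{u}, Order.IsSuccLimit l → DX l = ⋂ β < l, DX β)
    (hY0 : DY 0 = Set.univ)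
    (hYsucc : ∀ α : Ordinal.{u}, DY (α + 1) = derivedSet (DY α))
    (hYlim : ∀ l : Ordinal.{u}, Order.IsSuccLimit l → DY l = ⋂ β < l, DY β) :
    ∀ α : Ordinal.{u}, DX α = f ⁻¹' DY α := by
  intro α
  induction α using Ordinal.limitRecOn with
  | zero => rw [hX0, hY0, Set.preimage_univ]
  | add_one β ih =>
      rw [hXsucc, hYsucc, ih, dmap_derivedSet_preimage f hcont hopen hdisc]
  | limit l hl ih =>
      rw [hXlim l hl, hYlim l hl, Set.preimage_iInter₂]
      exact Set.iInter₂_congr ih
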